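/- For the machine copy^A the following input-output description holds. (i) ((w₁, v₁, 1), s) ↝ ((w₂, v₂, 1), s) if and only if (w₁, v₁) = (w₂, v₂). (ii) ((w₁, v₁, 1), f) ↝ ((w₂, v₂, 1), f) if and only if (w₁, v₁) = (w₂, v₂). (iii) ((w₁, v₁, 1), s) ↝ ((w₂, v₂, 1), f) if and only if v₁ = 1, w₂ = w₁ and v₂ = w₁. In particular the first tape is immutable: its content is the same at the start and the end of any such computation. -/

import Mathlib

namespace CopyMachine

/-- The four states of the machine `copy^A`. -/
inductive St | s | q₁ | q₂ | f

/-- Configurations of `copy^A`. -/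
abbrev Cfg (A : Type*) := (FreeGroup A × FreeGroup A × FreeGroup A) × St

/-- `g` is a generator or the inverse of a generator. -/
def IsGen {A : Type*} (g : FreeGroup A) : Prop :=
  ∃ x : A, g = FreeGroup.of x ∨ g = (FreeGroup.of x)⁻¹

/-- The basic steps of `copy^A`. -/
def Step0 {A : Type*} (P Q : Cfg A) : Prop :=
  (∃ a b c, b = 1 ∧ c = 1 ∧ P = ((a, b, c), St.s) ∧ Q = ((a, b, c), St.q₁)) ∨
  (∃ a b c g, IsGen g ∧ P = ((a, b, c), St.q₁) ∧ Q = ((g⁻¹ * a, b, c * g), St.q₁)) ∨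
  (∃ a b c, a = 1 ∧ b = 1 ∧ P = ((a, b, c), St.q₁) ∧ Q = ((a, b, c), St.q₂)) ∨
  (∃ a b c g, IsGen g ∧ P = ((a, b, c), St.q₂) ∧ Q = ((g * a, g * b, c * g⁻¹), St.q₂)) ∨
  (∃ a b c, c = 1 ∧ P = ((a, b, c), St.q₂) ∧ Q = ((a, b, c), St.f))

/-- The one-step relation: the symmetric closure of the basic steps. -/
def Step {A : Type*} (P Q : Cfg A) : Prop := Step0 P Q ∨ Step0 Q P

/-- The reachability relation of `copy^A` (chains of steps). -/
def Reach {A : Type*} : Cfg A → Cfg A → Prop := Relation.ReflTransGen Step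

/-- Invariant for computations starting in state `s`. -/
def Inv1 {A : Type*} (u v : FreeGroup A) : Cfg A → Prop :=
  fun P => match P with
  | ((a, b, c), St.s) => c * a = u ∧ b = v
  | ((a, b, c), St.q₁) => c * a = u ∧ b = v
  | ((a, b, c), St.q₂) => c * a = u ∧ c * b = u ∧ v = 1
  | ((a, b, c), St.f) => c * a = u ∧ c * b = u ∧ v = 1

/-- Invariant for computations starting in state `f`. -/
def Inv2 {A : Type*} (u v : FreeGroup A) : Cfg A → Prop :=
  fun P => match P with
  | ((a, b, c), St.s) => c * a = u ∧ u = v ∧ b = 1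
  | ((a, b, c), St.q₁) => c * a = u ∧ u = v ∧ b = 1
  | ((a, b, c), St.q₂) => c * a = u ∧ c * b = v
  | ((a, b, c), St.f) => c * a = u ∧ c * b = v

lemma inv1_step0 {A : Type*} (u v : FreeGroup A) {P Q : Cfg A} (h : Step0 P Q) :
    Inv1 u v P ↔ Inv1 u v Q := by
  rcases h with ⟨a,b,c,hb,hc,hP,hQ⟩ | ⟨a,b,c,g,hg,hP,hQ⟩ | ⟨a,b,c,ha,hb,hP,hQ⟩ |
    ⟨a,b,c,g,hg,hP,hQ⟩ | ⟨a,b,c,hc,hP,hQ⟩ <;> subst hP hQ <;>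
    simp only [Inv1, mul_assoc, mul_inv_cancel_left, inv_mul_cancel_left]
  · subst ha hb; simp only [mul_one]
    constructor
    · rintro ⟨h1, h2⟩; exact ⟨h1, h1, h2.symm⟩
    · rintro ⟨h1, _, h3⟩; exact ⟨h1, h3.symm⟩

lemma inv2_step0 {A : Type*} (u v : FreeGroup A) {P Q : Cfg A} (h : Step0 P Q) :
    Inv2 u v P ↔ Inv2 u v Q := by
  rcases h with ⟨a,b,c,hb,hc,hP,hQ⟩ | ⟨a,b,c,g,hg,hP,hQ⟩ | ⟨a,b,c,ha,hb,hP,hQ⟩ |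
    ⟨a,b,c,g,hg,hP,hQ⟩ | ⟨a,b,c,hc,hP,hQ⟩ <;> subst hP hQ <;>
    simp only [Inv2, mul_assoc, mul_inv_cancel_left, inv_mul_cancel_left]
  · subst ha hb; simp only [mul_one]
    constructor
    · rintro ⟨h1, h2, _⟩; exact ⟨h1, h2 ▸ h1⟩
    · rintro ⟨h1, h2⟩; exact ⟨h1, by rw [← h1, ← h2], trivial⟩

lemma inv1_reach {A : Type*} (u v : FreeGroup A) {P Q : Cfg A} (h : Reach P Q)
    (hP : Inv1 u v P) : Inv1 u v Q := by
  induction h with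
  | refl => exact hP
  | tail _ hstep ih =>
    rcases hstep with h | h
    · exact (inv1_step0 u v h).mp ih
    · exact (inv1_step0 u v h).mpr ih

lemma inv2_reach {A : Type*} (u v : FreeGroup A) {P Q : Cfg A} (h : Reach P Q)
    (hP : Inv2 u v P) : Inv2 u v Q := by
  induction h with
  | refl => exact hP
  | tail _ hstep ih =>
    rcases hstep with h | h
    · exact (inv2_step0 u v h).mp ih
    · exact (inv2_step0 u v h).mpr ih

lemma reach_q1 {A : Type*} (a : FreeGroup A) :
    ∀ r c : FreeGroup A, Reach ((a * r, 1, c), St.q₁) ((r, 1, c * a), St.q₁) := by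
  induction a using FreeGroup.induction_on with
  | C1 => intro r c; simp only [one_mul, mul_one]; exact Relation.ReflTransGen.refl
  | of x =>
    intro r c
    refine Relation.ReflTransGen.single (Or.inl (Or.inr (Or.inl
      ⟨FreeGroup.of x * r, 1, c, FreeGroup.of x, ⟨x, Or.inl rfl⟩, rfl, ?_⟩)))
    rw [inv_mul_cancel_left]
  | inv_of x _ =>
    intro r c
    refine Relation.ReflTransGen.single (Or.inl (Or.inr (Or.inl
      ⟨(FreeGroup.of x)⁻¹ * r, 1, c, (FreeGroup.of x)⁻¹, ⟨x, Or.inr rfl⟩, rfl, ?_⟩)))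
    rw [inv_mul_cancel_left]
  | mul x y ihx ihy =>
    intro r c
    have h1 := ihx (y * r) c
    have h2 := ihy r (c * x)
    rw [← mul_assoc] at h1
    rw [mul_assoc] at h2
    exact h1.trans h2

lemma reach_q2 {A : Type*} (d : FreeGroup A) :
    ∀ a b c : FreeGroup A, Reach ((a, b, c * d), St.q₂) ((d * a, d * b, c), St.q₂) := by
  induction d using FreeGroup.induction_on with
  | C1 => intro a b c; simp only [one_mul, mul_one]; exact Relation.ReflTransGen.refl
  | of x =>
    intro a b c
    refine Relation.ReflTransGen.single (Or.inl (Or.inr (Or.inr (Or.inr (Or.inl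
      ⟨a, b, c * FreeGroup.of x, FreeGroup.of x, ⟨x, Or.inl rfl⟩, rfl, ?_⟩)))))
    rw [mul_inv_cancel_right]
  | inv_of x _ =>
    intro a b c
    refine Relation.ReflTransGen.single (Or.inl (Or.inr (Or.inr (Or.inr (Or.inl
      ⟨a, b, c * (FreeGroup.of x)⁻¹, (FreeGroup.of x)⁻¹, ⟨x, Or.inr rfl⟩, rfl, ?_⟩)))))
    rw [mul_inv_cancel_right]
  | mul x y ihx ihy =>
    intro a b c
    have h1 := ihy a b (c * x)
    rw [mul_assoc] at h1
    have h2 := ihx (y * a) (y * b) c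
    rw [← mul_assoc x y a, ← mul_assoc x y b] at h2
    exact h1.trans h2

/-- The input-output description of `copy^A`. -/
theorem copy_io {A : Type*} :
    (∀ w₁ v₁ w₂ v₂ : FreeGroup A,
      Reach ((w₁, v₁, 1), St.s) ((w₂, v₂, 1), St.s) ↔ (w₁ = w₂ ∧ v₁ = v₂)) ∧
    (∀ w₁ v₁ w₂ v₂ : FreeGroup A,
      Reach ((w₁, v₁, 1), St.f) ((w₂, v₂, 1), St.f) ↔ (w₁ = w₂ ∧ v₁ = v₂)) ∧
    (∀ w₁ v₁ w₂ v₂ : FreeGroup A,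
      Reach ((w₁, v₁, 1), St.s) ((w₂, v₂, 1), St.f) ↔ (v₁ = 1 ∧ w₂ = w₁ ∧ v₂ = w₁)) := by
  refine ⟨fun w₁ v₁ w₂ v₂ => ⟨fun h => ?_, fun ⟨h1, h2⟩ => by subst h1 h2; exact .refl⟩,
    fun w₁ v₁ w₂ v₂ => ⟨fun h => ?_, fun ⟨h1, h2⟩ => by subst h1 h2; exact .refl⟩,
    fun w₁ v₁ w₂ v₂ => ⟨fun h => ?_, fun ⟨h1, h2, h3⟩ => ?_⟩⟩
  · have := inv1_reach w₁ v₁ h ⟨by rw [one_mul], rfl⟩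
    obtain ⟨h1, h2⟩ := this
    rw [one_mul] at h1
    exact ⟨h1.symm, h2.symm⟩
  · have := inv2_reach w₁ v₁ h ⟨by rw [one_mul], by rw [one_mul]⟩
    obtain ⟨h1, h2⟩ := this
    rw [one_mul] at h1 h2
    exact ⟨h1.symm, h2.symm⟩
  · have := inv1_reach w₁ v₁ h ⟨by rw [one_mul], rfl⟩
    obtain ⟨h1, h2, h3⟩ := this
    rw [one_mul] at h1 h2
    exact ⟨h3, h1, h2⟩
  · subst h1; rw [h2, h3]
    have s1 : Step (((w₁, 1, 1) : FreeGroup A × FreeGroup A × FreeGroup A), St.s)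
        ((w₁, 1, 1), St.q₁) := Or.inl (Or.inl ⟨w₁, 1, 1, rfl, rfl, rfl, rfl⟩)
    have s2 : Reach (((w₁, 1, 1) : FreeGroup A × FreeGroup A × FreeGroup A), St.q₁)
        ((1, 1, w₁), St.q₁) := by
      have := reach_q1 w₁ 1 1
      rwa [mul_one, one_mul] at this
    have s3 : Step (((1, 1, w₁) : FreeGroup A × FreeGroup A × FreeGroup A), St.q₁)
        ((1, 1, w₁), St.q₂) := Or.inl (Or.inr (Or.inr (Or.inl ⟨1, 1, w₁, rfl, rfl, rfl, rfl⟩)))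
    have s4 : Reach (((1, 1, w₁) : FreeGroup A × FreeGroup A × FreeGroup A), St.q₂)
        ((w₁, w₁, 1), St.q₂) := by
      have := reach_q2 w₁ 1 1 1
      rwa [mul_one, one_mul] at this
    have s5 : Step (((w₁, w₁, 1) : FreeGroup A × FreeGroup A × FreeGroup A), St.q₂)
        ((w₁, w₁, 1), St.f) := Or.inl (Or.inr (Or.inr (Or.inr (Or.inr
        ⟨w₁, w₁, 1, rfl, rfl, rfl⟩))))
    exact (((((Relation.ReflTransGen.refl.tail s1).trans s2).tail s3).trans s4).tail s5)

end CopyMachine
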